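/- Let n ≥ 2 and let the repeated averaging chain start from x_0 = (1,0,…,0) ∈ ℝ^n, with T(k) = ∑_{i=1}^n |x_{k,i} − 1/n|. Then for every c > 0 and every integer k ≥ n log n + cn, the expectation of T(k) under μ_n satisfies E(T(k)) ≤ e^{−c/2}. -/

import Mathlib

open MeasureTheory Finset Filter
open scoped ENNReal NNReal

/-- The set of unordered pairs of distinct indices in `Fin n`, encoded as
2-element subsets of `Fin n`. -/
abbrev Pairs (n : ℕ) : Type := {s : Finset (Fin n) // s.card = 2}

instance (n : ℕ) : MeasurableSpace (Pairs n) := ⊤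

/-- The uniform probability measure on the set of pairs. -/
noncomputable def uniformPair (n : ℕ) : Measure (Pairs n) :=
  (Fintype.card (Pairs n) : ℝ≥0∞)⁻¹ • Measure.count

/-- `μ` is the infinite product over `ℕ` of the uniform measure on pairs:
its finite-dimensional marginals are the finite uniform product measures.
(This characterizes the infinite product measure uniquely.) -/
def IsProductLaw (n : ℕ) (μ : Measure (ℕ → Pairs n)) : Prop :=
  ∀ K : ℕ, μ.map (fun ω (i : Fin K) => ω i) = Measure.pi fun _ : Fin K => uniformPair n

/-- The pair-averaging operation: both coordinates in `s` (a 2-element set `{i,j}`)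
are replaced by `(x i + x j)/2`; the other coordinates are unchanged. -/
noncomputable def avgStep {n : ℕ} (s : Finset (Fin n)) (x : Fin n → ℝ) : Fin n → ℝ :=
  fun l => if l ∈ s then (∑ m ∈ s, x m) / 2 else x l

/-- The repeated averaging chain started at `x0`, driven by the pair sequence `ω`. -/
noncomputable def chain {n : ℕ} (x0 : Fin n → ℝ) (ω : ℕ → Pairs n) : ℕ → Fin n → ℝ
  | 0 => x0
  | k + 1 => avgStep (ω k).1 (chain x0 ω k)

/-- `T(k) = ∑_i |x_{k,i} - 1/n|`. -/
noncomputable def Tdist {n : ℕ} (x0 : Fin n → ℝ) (ω : ℕ → Pairs n) (k : ℕ) : ℝ :=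
  ∑ i, |chain x0 ω k i - 1 / n|

/-- The initial vector `(1,0,…,0)`. -/
def e1 (n : ℕ) : Fin n → ℝ := fun i => if i.val = 0 then 1 else 0

/-- The standard normal cumulative distribution function. -/
noncomputable def stdGaussianCDF (x : ℝ) : ℝ :=
  ∫ t in Set.Iic x, (2 * Real.pi) ^ (-(1:ℝ)/2) * Real.exp (-t ^ 2 / 2)

section Aux
variable {n : ℕ}

/-- `V(x) = ∑ (x i - 1/n)^2`. -/
noncomputable def Vfun (n : ℕ) (x : Fin n → ℝ) : ℝ := ∑ i, (x i - 1 / n) ^ 2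

lemma Vfun_nonneg (x : Fin n → ℝ) : 0 ≤ Vfun n x :=
  Finset.sum_nonneg fun _ _ => sq_nonneg _

lemma sum_avgStep {s : Finset (Fin n)} (hs : s.card = 2) (x : Fin n → ℝ) :
    ∑ i, avgStep s x i = ∑ i, x i := by
  rw [← Finset.sum_compl_add_sum s, ← Finset.sum_compl_add_sum s x]
  have h1 : ∑ i ∈ sᶜ, avgStep s x i = ∑ i ∈ sᶜ, x i :=
    Finset.sum_congr rfl fun i hi => by simp [avgStep, Finset.mem_compl.mp hi]
  have h2 : ∑ i ∈ s, avgStep s x i = ∑ i ∈ s, x i := by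
    have : ∀ i ∈ s, avgStep s x i = (∑ m ∈ s, x m) / 2 := fun i hi => by simp [avgStep, hi]
    rw [Finset.sum_congr rfl this, Finset.sum_const, hs, nsmul_eq_mul]
    ring
  rw [h1, h2]

lemma V_avgStep {s : Finset (Fin n)} (hs : s.card = 2) (x : Fin n → ℝ) :
    Vfun n (avgStep s x)
      = Vfun n x + (∑ l ∈ s, (x l - 1 / n)) ^ 2 / 2 - ∑ l ∈ s, (x l - 1 / n) ^ 2 := by
  set a : ℝ := 1 / n with ha
  unfold Vfun
  rw [← Finset.sum_compl_add_sum s (fun i => (avgStep s x i - a) ^ 2),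
    ← Finset.sum_compl_add_sum s (fun i => (x i - a) ^ 2)]
  have h1 : ∑ i ∈ sᶜ, (avgStep s x i - a) ^ 2 = ∑ i ∈ sᶜ, (x i - a) ^ 2 :=
    Finset.sum_congr rfl fun i hi => by simp [avgStep, Finset.mem_compl.mp hi]
  have h2 : ∑ i ∈ s, (avgStep s x i - a) ^ 2 = 2 * ((∑ m ∈ s, x m) / 2 - a) ^ 2 := by
    have : ∀ i ∈ s, (avgStep s x i - a) ^ 2 = ((∑ m ∈ s, x m) / 2 - a) ^ 2 := fun i hi => by
      simp [avgStep, hi]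
    rw [Finset.sum_congr rfl this, Finset.sum_const, hs, nsmul_eq_mul]
    push_cast; ring
  have h3 : ∑ l ∈ s, (x l - a) = (∑ m ∈ s, x m) - 2 * a := by
    rw [Finset.sum_sub_distrib, Finset.sum_const, hs, nsmul_eq_mul]
    push_cast; ring
  rw [h1, h2, h3]
  ring

lemma card_filter_mem (hn : 2 ≤ n) (a : Fin n) :
    (Finset.univ.filter fun s : Pairs n => a ∈ s.1).card = n - 1 := by
  have key : (Finset.univ.erase a).card
      = (Finset.univ.filter fun s : Pairs n => a ∈ s.1).card := Finset.card_bij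
    (fun (b : Fin n) (hb : b ∈ Finset.univ.erase a) =>
      (⟨{a, b}, Finset.card_pair (Finset.ne_of_mem_erase hb).symm⟩ : Pairs n))
    (fun b hb => by simp)
    (fun b hb b' hb' h => by
      have h2 : ({a, b} : Finset (Fin n)) = {a, b'} := congrArg Subtype.val h
      have : b ∈ ({a, b'} : Finset (Fin n)) := h2 ▸ (by simp)
      rcases Finset.mem_insert.mp this with h' | h'
      · exact absurd h' (Finset.ne_of_mem_erase hb)
      · exact Finset.mem_singleton.mp h')
    (fun s hs => by
      have has : a ∈ s.1 := by simpa using hs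
      have hcard : (s.1.erase a).card = 1 := by
        rw [Finset.card_erase_of_mem has, s.2]
      obtain ⟨b, hb⟩ := Finset.card_eq_one.mp hcard
      have hbmem : b ∈ s.1.erase a := hb ▸ Finset.mem_singleton_self b
      refine ⟨b, Finset.mem_erase.mpr ⟨(Finset.mem_erase.mp hbmem).1, Finset.mem_univ b⟩, ?_⟩
      apply Subtype.ext
      simp only
      rw [← Finset.insert_erase has, hb])
  rw [← key, Finset.card_erase_of_mem (Finset.mem_univ a), Finset.card_univ, Fintype.card_fin]

lemma filter_mem_pair {a b : Fin n} (hab : a ≠ b) :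
    (Finset.univ.filter fun s : Pairs n => a ∈ s.1 ∧ b ∈ s.1)
      = {(⟨{a, b}, Finset.card_pair hab⟩ : Pairs n)} := by
  ext s
  simp only [Finset.mem_filter, Finset.mem_univ, true_and, Finset.mem_singleton]
  constructor
  · rintro ⟨ha, hb⟩
    have hsub : ({a, b} : Finset (Fin n)) ⊆ s.1 := by
      intro x hx
      rcases Finset.mem_insert.mp hx with h | h
      · exact h ▸ ha
      · exact (Finset.mem_singleton.mp h) ▸ hb
    have : s.1 = {a, b} :=
      (Finset.eq_of_subset_of_card_le hsub (by rw [s.2, Finset.card_pair hab])).symm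
    exact Subtype.ext this
  · rintro rfl
    exact ⟨by simp, by simp⟩

lemma sum_pairs_inner (hn : 2 ≤ n) (f : Fin n → ℝ) :
    ∑ s : Pairs n, ∑ l ∈ s.1, f l = ((n : ℝ) - 1) * ∑ l, f l := by
  have step1 : ∀ s : Pairs n, ∑ l ∈ s.1, f l = ∑ l, if l ∈ s.1 then f l else 0 := by
    intro s
    rw [Finset.sum_ite_mem, Finset.univ_inter]
  rw [Finset.sum_congr rfl fun s _ => step1 s, Finset.sum_comm]
  rw [Finset.mul_sum]
  refine Finset.sum_congr rfl fun l _ => ?_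
  rw [← Finset.sum_filter, Finset.sum_const, card_filter_mem hn l, nsmul_eq_mul]
  have : ((n - 1 : ℕ) : ℝ) = (n : ℝ) - 1 := by
    have : (1 : ℕ) ≤ n := by omega
    push_cast [this]; ring
  rw [this]

lemma card_pairs_real (hn : 2 ≤ n) :
    (Fintype.card (Pairs n) : ℝ) * 2 = (n : ℝ) * ((n : ℝ) - 1) := by
  have h := sum_pairs_inner hn (fun _ => (1 : ℝ))
  simp only [Finset.sum_const, nsmul_eq_mul, mul_one] at h
  have h2 : ∀ s : Pairs n, ((s.1.card : ℝ)) = 2 := fun s => by rw [s.2]; norm_num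
  rw [Finset.sum_congr rfl (fun s _ => h2 s), Finset.card_univ, Fintype.card_fin] at h
  rw [Finset.sum_const, nsmul_eq_mul, Finset.card_univ] at h
  rw [h]; ring

lemma sum_pairs_sq (hn : 2 ≤ n) (y : Fin n → ℝ) (hy : ∑ l, y l = 0) :
    ∑ s : Pairs n, (∑ l ∈ s.1, y l) ^ 2 = ((n : ℝ) - 2) * ∑ l, (y l) ^ 2 := by
  have expand : ∀ s : Pairs n,
      (∑ l ∈ s.1, y l) ^ 2 = ∑ a, ∑ b, if a ∈ s.1 ∧ b ∈ s.1 then y a * y b else 0 := by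
    intro s
    rw [sq, Finset.sum_mul_sum]
    symm
    calc ∑ a, ∑ b, (if a ∈ s.1 ∧ b ∈ s.1 then y a * y b else 0)
        = ∑ a, (if a ∈ s.1 then ∑ b, (if b ∈ s.1 then y a * y b else 0) else 0) := by
          refine Finset.sum_congr rfl fun a _ => ?_
          by_cases ha : a ∈ s.1 <;> simp [ha]
      _ = ∑ a ∈ s.1, ∑ b ∈ s.1, y a * y b := by
          rw [Finset.sum_ite_mem, Finset.univ_inter]
          exact Finset.sum_congr rfl fun a _ => by rw [Finset.sum_ite_mem, Finset.univ_inter]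
  rw [Finset.sum_congr rfl fun s _ => expand s, Finset.sum_comm]
  have swap2 : ∀ a : Fin n, ∑ s : Pairs n, ∑ b, (if a ∈ s.1 ∧ b ∈ s.1 then y a * y b else 0)
      = ∑ b, ∑ s : Pairs n, (if a ∈ s.1 ∧ b ∈ s.1 then y a * y b else 0) :=
    fun a => Finset.sum_comm
  rw [Finset.sum_congr rfl fun a _ => swap2 a]
  have inner : ∀ a b : Fin n,
      (∑ s : Pairs n, if a ∈ s.1 ∧ b ∈ s.1 then y a * y b else 0)
        = (if a = b then ((n : ℝ) - 1) else 1) * (y a * y b) := by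
    intro a b
    rw [← Finset.sum_filter, Finset.sum_const, nsmul_eq_mul]
    by_cases hab : a = b
    · subst hab
      have hpred : (Finset.univ.filter fun s : Pairs n => a ∈ s.1 ∧ a ∈ s.1)
          = Finset.univ.filter fun s : Pairs n => a ∈ s.1 := by
        apply Finset.filter_congr; intro s _; rw [and_self]
      rw [hpred, card_filter_mem hn a, if_pos rfl]
      have : ((n - 1 : ℕ) : ℝ) = (n : ℝ) - 1 := by
        have h1 : (1 : ℕ) ≤ n := by omega
        push_cast [h1]; ring
      rw [this]
    · rw [filter_mem_pair hab, Finset.card_singleton, if_neg hab]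
      norm_num
  rw [Finset.sum_congr rfl fun a _ => Finset.sum_congr rfl fun b _ => inner a b]
  have split : ∀ a b : Fin n, (if a = b then ((n : ℝ) - 1) else 1) * (y a * y b)
      = y a * y b + (if a = b then ((n : ℝ) - 2) * (y a * y b) else 0) := by
    intro a b
    by_cases hab : a = b
    · simp [hab]; ring
    · simp [hab]
  rw [Finset.sum_congr rfl fun a _ => Finset.sum_congr rfl fun b _ => split a b]
  simp only [Finset.sum_add_distrib]
  rw [← Finset.sum_mul_sum, hy]
  have diag : ∀ a : Fin n, ∑ b, (if a = b then ((n : ℝ) - 2) * (y a * y b) else 0)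
      = ((n : ℝ) - 2) * (y a) ^ 2 := by
    intro a
    rw [Finset.sum_ite_eq]
    simp [sq]
  rw [Finset.sum_congr rfl fun a _ => diag a, ← Finset.mul_sum]
  ring

lemma step_sum (hn : 2 ≤ n) (x : Fin n → ℝ) (hx : ∑ i, x i = 1) :
    ∑ s : Pairs n, Vfun n (avgStep s.1 x)
      = ((Fintype.card (Pairs n) : ℝ) - (n : ℝ) / 2) * Vfun n x := by
  have hn0 : (n : ℝ) ≠ 0 := by
    have : 0 < n := by omega
    exact_mod_cast this.ne'
  have hy : ∑ l : Fin n, (x l - 1 / (n : ℝ)) = 0 := by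
    rw [Finset.sum_sub_distrib, hx, Finset.sum_const, Finset.card_univ, Fintype.card_fin,
      nsmul_eq_mul]
    field_simp
    ring
  have h2 := sum_pairs_sq hn (fun l => x l - 1 / n) hy
  have h3 := sum_pairs_inner hn (fun l => (x l - 1 / n) ^ 2)
  have hV : ∑ l : Fin n, (x l - 1 / (n : ℝ)) ^ 2 = Vfun n x := rfl
  rw [Finset.sum_congr rfl fun (s : Pairs n) _ => V_avgStep s.2 x, Finset.sum_sub_distrib,
    Finset.sum_add_distrib, Finset.sum_const, Finset.card_univ, nsmul_eq_mul, ← Finset.sum_div,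
    h2, h3, hV]
  ring

/-- The chain driven by a finite pair sequence, peeling the first step. -/
noncomputable def foldChain {n : ℕ} : {k : ℕ} → (Fin k → Pairs n) → (Fin n → ℝ) → (Fin n → ℝ)
  | 0, _, x => x
  | _ + 1, σ, x => foldChain (fun i => σ i.succ) (avgStep (σ 0).1 x)

lemma foldChain_cons {k : ℕ} (s : Pairs n) (τ : Fin k → Pairs n) (x : Fin n → ℝ) :
    foldChain (Fin.cons s τ : Fin (k + 1) → Pairs n) x = foldChain τ (avgStep s.1 x) := by
  have h0 : (Fin.cons s τ : Fin (k + 1) → Pairs n) 0 = s := rfl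
  have hs : (fun i : Fin k => (Fin.cons s τ : Fin (k + 1) → Pairs n) i.succ) = τ :=
    funext fun i => @Fin.cons_succ k (fun _ => Pairs n) s τ i
  show foldChain (fun i : Fin k => (Fin.cons s τ : Fin (k + 1) → Pairs n) i.succ)
      (avgStep ((Fin.cons s τ : Fin (k + 1) → Pairs n) 0).1 x) = _
  rw [h0, hs]

lemma chain_shift (x0 : Fin n → ℝ) (ω : ℕ → Pairs n) :
    ∀ k, chain x0 ω (k + 1) = chain (avgStep (ω 0).1 x0) (fun m => ω (m + 1)) k := by
  intro k
  induction k with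
  | zero => rfl
  | succ k ih =>
    show avgStep (ω (k + 1)).1 (chain x0 ω (k + 1)) = _
    rw [ih]
    rfl

lemma chain_eq_fold (x0 : Fin n → ℝ) : ∀ (k : ℕ) (ω : ℕ → Pairs n),
    chain x0 ω k = foldChain (fun i : Fin k => ω i) x0 := by
  intro k
  induction k generalizing x0 with
  | zero => intro ω; rfl
  | succ k ih =>
    intro ω
    rw [chain_shift, ih]
    show _ = foldChain (fun i : Fin k => (fun j : Fin (k + 1) => ω j) i.succ)
      (avgStep ((fun j : Fin (k + 1) => ω j) 0).1 x0)
    simp only [Fin.val_succ, Fin.val_zero]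

lemma sum_foldChain {k : ℕ} (σ : Fin k → Pairs n) (x : Fin n → ℝ) (hx : ∑ i, x i = 1) :
    ∑ i, foldChain σ x i = 1 := by
  induction k generalizing x with
  | zero => exact hx
  | succ k ih =>
    show ∑ i, foldChain (fun i => σ i.succ) (avgStep (σ 0).1 x) i = 1
    exact ih _ _ (by rw [sum_avgStep (σ 0).2 x, hx])

lemma sum_fold (hn : 2 ≤ n) (k : ℕ) (x : Fin n → ℝ) (hx : ∑ i, x i = 1) :
    ∑ σ : Fin k → Pairs n, Vfun n (foldChain σ x)
      = (((Fintype.card (Pairs n) : ℝ)) - (n : ℝ) / 2) ^ k * Vfun n x := by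
  induction k generalizing x with
  | zero =>
    rw [pow_zero, one_mul]
    have he : ∑ σ : Fin 0 → Pairs n, Vfun n (foldChain σ x)
        = ∑ _σ : Fin 0 → Pairs n, Vfun n x := Finset.sum_congr rfl fun σ _ => rfl
    rw [he, Finset.sum_const, Finset.card_univ]
    simp
  | succ k ih =>
    rw [← Equiv.sum_comp (Fin.consEquiv (fun _ : Fin (k + 1) => Pairs n))
      (fun σ => Vfun n (foldChain σ x)), Fintype.sum_prod_type]
    have : ∀ (s : Pairs n) (τ : Fin k → Pairs n),
        Vfun n (foldChain ((Fin.consEquiv fun _ => Pairs n) (s, τ)) x)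
          = Vfun n (foldChain τ (avgStep s.1 x)) := by
      intro s τ
      rw [show ((Fin.consEquiv fun _ => Pairs n) (s, τ)) = Fin.cons s τ from rfl,
        foldChain_cons]
    rw [Finset.sum_congr rfl fun s _ => Finset.sum_congr rfl fun τ _ => this s τ]
    rw [Finset.sum_congr rfl fun (s : Pairs n) _ =>
      ih (avgStep s.1 x) (by rw [sum_avgStep s.2 x, hx])]
    rw [← Finset.mul_sum, step_sum hn x hx, pow_succ]
    ring

lemma sum_e1 (hn : 2 ≤ n) : ∑ i, e1 n i = 1 := by
  haveI : NeZero n := ⟨by omega⟩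
  have h : ∀ i : Fin n, e1 n i = if i = (0 : Fin n) then (1 : ℝ) else 0 := by
    intro i
    simp only [e1]
    by_cases hi : i = 0
    · subst hi; simp
    · rw [if_neg hi, if_neg (fun hv => hi (Fin.val_inj.mp (by simpa using hv)))]
  rw [Finset.sum_congr rfl fun i _ => h i,
    Finset.sum_ite_eq' Finset.univ (0 : Fin n) (fun _ => (1 : ℝ))]
  simp

lemma V_e1 (hn : 2 ≤ n) : Vfun n (e1 n) ≤ 1 := by
  have hnn : 0 < n := by omega
  have hn0 : (0 : ℝ) < n := by exact_mod_cast hnn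
  have hsq : ∀ i : Fin n, (e1 n i) ^ 2 = e1 n i := by
    intro i
    simp only [e1]
    by_cases h : i.val = 0 <;> simp [h]
  have expand : ∀ i : Fin n, (e1 n i - 1 / (n : ℝ)) ^ 2
      = e1 n i - 2 / n * e1 n i + 1 / n ^ 2 := by
    intro i
    have h1 : (e1 n i - 1 / (n : ℝ)) ^ 2 = (e1 n i) ^ 2 - 2 / n * e1 n i + 1 / n ^ 2 := by
      ring
    rw [h1, hsq i]
  unfold Vfun
  rw [Finset.sum_congr rfl fun i _ => expand i, Finset.sum_add_distrib,
    Finset.sum_sub_distrib, ← Finset.mul_sum, sum_e1 hn, Finset.sum_const,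
    Finset.card_univ, Fintype.card_fin, nsmul_eq_mul]
  have h2 : (n : ℝ) * (1 / n ^ 2) = 1 / n := by
    field_simp
  rw [h2]
  have h3 : 1 / (n : ℝ) ≤ 2 / n := by gcongr; norm_num
  linarith

lemma contraction_factor (hn : 2 ≤ n) :
    (Fintype.card (Pairs n) : ℝ) - (n : ℝ) / 2
      = (Fintype.card (Pairs n) : ℝ) * (((n : ℝ) - 2) / ((n : ℝ) - 1)) := by
  have h1 : (1 : ℝ) < (n : ℝ) := by exact_mod_cast (by omega : 1 < n)
  have hne : (n : ℝ) - 1 ≠ 0 := by linarith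
  have hcard := card_pairs_real hn
  rw [← mul_div_assoc, eq_div_iff hne]
  linear_combination hcard / 2

end Aux

/-- **`L¹` convergence shortly after `n log n`.** Starting from `x₀ = (1,0,…,0)`,
for every `c > 0` and every integer `k ≥ n log n + c n`, `E(T(k)) ≤ e^{-c/2}`. -/
theorem expected_L1_bound (n : ℕ) (hn : 2 ≤ n)
    (μ : Measure (ℕ → Pairs n)) (hμ : IsProductLaw n μ)
    (c : ℝ) (hc : 0 < c) (k : ℕ)
    (hk : (n : ℝ) * Real.log n + c * n ≤ k) :
    ∫ ω, Tdist (e1 n) ω k ∂μ ≤ Real.exp (-c / 2) := by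
  haveI : MeasurableSingletonClass (Pairs n) := ⟨fun _ => trivial⟩
  haveI : MeasurableSingletonClass (Fin k → Pairs n) := by
    refine ⟨fun σ => ?_⟩
    have h : {σ} = Set.pi Set.univ (fun i => {σ i}) := by
      ext τ
      simp [funext_iff]
    rw [h]
    exact MeasurableSet.univ_pi fun i => trivial
  have hNpos : 0 < Fintype.card (Pairs n) := by
    refine Fintype.card_pos_iff.mpr ⟨⟨{⟨0, by omega⟩, ⟨1, by omega⟩}, Finset.card_pair ?_⟩⟩
    intro h
    exact absurd (congrArg Fin.val h) (by simp)
  have hNne0 : ((Fintype.card (Pairs n) : ℝ≥0∞)) ≠ 0 := by exact_mod_cast hNpos.ne'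
  haveI : IsProbabilityMeasure (uniformPair n) := by
    constructor
    rw [uniformPair, Measure.smul_apply, smul_eq_mul, Measure.count_univ]
    rw [ENat.card_eq_coe_fintype_card, ENat.toENNReal_coe]
    exact ENNReal.inv_mul_cancel hNne0 (ENNReal.natCast_ne_top _)
  have hπ : Measurable (fun (ω : ℕ → Pairs n) (i : Fin k) => ω i.val) :=
    measurable_pi_lambda _ fun i => measurable_pi_apply _
  set ν := Measure.pi (fun _ : Fin k => uniformPair n) with hν
  set F : (Fin k → Pairs n) → ℝ := fun σ => ∑ i, |foldChain σ (e1 n) i - 1 / n| with hFdef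
  have hF : Measurable F := measurable_of_countable F
  have hint : ∫ ω, Tdist (e1 n) ω k ∂μ = ∫ σ, F σ ∂ν := by
    rw [hν, ← hμ k, integral_map hπ.aemeasurable hF.aestronglyMeasurable]
    refine integral_congr_ae (Filter.Eventually.of_forall fun ω => ?_)
    show Tdist (e1 n) ω k = F (fun i : Fin k => ω i)
    unfold Tdist
    rw [chain_eq_fold]
  set N : ℝ := (Fintype.card (Pairs n) : ℝ) with hNdef
  have hNR : 0 < N := by rw [hNdef]; exact_mod_cast hNpos
  set w : ℝ := N⁻¹ ^ k with hwdef
  have hw0 : 0 ≤ w := by positivity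
  set E : ℝ := ∑ σ : Fin k → Pairs n, w * F σ with hEdef
  have hsingle : ∀ σ : Fin k → Pairs n,
      ν {σ} = ((Fintype.card (Pairs n) : ℝ≥0∞))⁻¹ ^ k := by
    intro σ
    have h : {σ} = Set.pi Set.univ (fun i => {σ i}) := by
      ext τ
      simp [funext_iff]
    rw [hν, h, Measure.pi_pi]
    have h2 : ∀ i : Fin k, uniformPair n {σ i} = ((Fintype.card (Pairs n) : ℝ≥0∞))⁻¹ := by
      intro i
      rw [uniformPair, Measure.smul_apply, smul_eq_mul, Measure.count_singleton, mul_one]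
    rw [Finset.prod_congr rfl fun i _ => h2 i, Finset.prod_const, Finset.card_univ,
      Fintype.card_fin]
  have hwval : ∀ σ : Fin k → Pairs n, (ν {σ}).toReal = w := by
    intro σ
    rw [hsingle σ, hwdef, hNdef]
    simp [ENNReal.toReal_pow, ENNReal.toReal_inv]
  have hEint : ∫ σ, F σ ∂ν = E := by
    rw [integral_fintype (Integrable.of_finite)]
    exact Finset.sum_congr rfl fun σ _ => by rw [measureReal_def, hwval σ, smul_eq_mul]
  have hsumw : ∑ _σ : Fin k → Pairs n, w = 1 := by
    rw [Finset.sum_const, Finset.card_univ, Fintype.card_fun, Fintype.card_fin, nsmul_eq_mul,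
      hwdef, hNdef]
    push_cast
    rw [← mul_pow, mul_inv_cancel₀ (by exact_mod_cast hNpos.ne' : ((Fintype.card (Pairs n) : ℝ)) ≠ 0), one_pow]
  have hE0 : 0 ≤ E :=
    Finset.sum_nonneg fun σ _ => mul_nonneg hw0
      (Finset.sum_nonneg fun i _ => abs_nonneg _)
  have hCS1 : E ^ 2 ≤ ∑ σ : Fin k → Pairs n, w * (F σ) ^ 2 := by
    have h := Finset.sum_mul_sq_le_sq_mul_sq Finset.univ
      (fun _ : Fin k → Pairs n => Real.sqrt w) (fun σ => Real.sqrt w * F σ)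
    have e1' : ∀ σ : Fin k → Pairs n, Real.sqrt w * (Real.sqrt w * F σ) = w * F σ := fun σ => by
      rw [← mul_assoc, Real.mul_self_sqrt hw0]
    have e3 : ∀ σ : Fin k → Pairs n, (Real.sqrt w * F σ) ^ 2 = w * F σ ^ 2 := fun σ => by
      rw [mul_pow, Real.sq_sqrt hw0]
    calc E ^ 2 = (∑ σ : Fin k → Pairs n, Real.sqrt w * (Real.sqrt w * F σ)) ^ 2 := by
          rw [Finset.sum_congr rfl fun σ _ => e1' σ]
      _ ≤ (∑ _σ : Fin k → Pairs n, Real.sqrt w ^ 2)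
          * ∑ σ : Fin k → Pairs n, (Real.sqrt w * F σ) ^ 2 := h
      _ = 1 * ∑ σ : Fin k → Pairs n, w * F σ ^ 2 := by
          rw [Finset.sum_congr rfl fun σ _ => e3 σ,
            Finset.sum_congr rfl fun (σ : Fin k → Pairs n) (_ : σ ∈ Finset.univ) =>
              Real.sq_sqrt hw0, hsumw]
      _ = _ := one_mul _
  have hFV : ∀ σ : Fin k → Pairs n, F σ ^ 2 ≤ (n : ℝ) * Vfun n (foldChain σ (e1 n)) := by
    intro σ
    have h := sq_sum_le_card_mul_sum_sq (s := Finset.univ)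
      (f := fun i : Fin n => |foldChain σ (e1 n) i - 1 / (n : ℝ)|)
    simp only [sq_abs] at h
    rw [Finset.card_univ, Fintype.card_fin] at h
    exact h
  have hVsum : ∑ σ : Fin k → Pairs n, Vfun n (foldChain σ (e1 n))
      = (N - n / 2) ^ k * Vfun n (e1 n) := sum_fold hn k (e1 n) (sum_e1 hn)
  set ρ : ℝ := ((n : ℝ) - 2) / ((n : ℝ) - 1) with hρdef
  have h1n : (1 : ℝ) < n := by exact_mod_cast (by omega : 1 < n)
  have h2n : (2 : ℝ) ≤ n := by exact_mod_cast hn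
  have hρ0 : 0 ≤ ρ := div_nonneg (by linarith) (by linarith)
  have hwNk : w * (N - n / 2) ^ k = ρ ^ k := by
    calc w * (N - n / 2) ^ k = N⁻¹ ^ k * (N * ρ) ^ k := by rw [contraction_factor hn]
      _ = (N⁻¹ * (N * ρ)) ^ k := by rw [← mul_pow]
      _ = ρ ^ k := by rw [← mul_assoc, inv_mul_cancel₀ hNR.ne', one_mul]
  have hE2 : E ^ 2 ≤ (n : ℝ) * ρ ^ k := by
    calc E ^ 2 ≤ ∑ σ : Fin k → Pairs n, w * F σ ^ 2 := hCS1
      _ ≤ ∑ σ : Fin k → Pairs n, w * ((n : ℝ) * Vfun n (foldChain σ (e1 n))) :=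
          Finset.sum_le_sum fun σ _ => mul_le_mul_of_nonneg_left (hFV σ) hw0
      _ = w * (n : ℝ) * ∑ σ : Fin k → Pairs n, Vfun n (foldChain σ (e1 n)) := by
          rw [Finset.mul_sum]
          exact Finset.sum_congr rfl fun σ _ => by ring
      _ = (w * (N - n / 2) ^ k) * ((n : ℝ) * Vfun n (e1 n)) := by rw [hVsum]; ring
      _ = ρ ^ k * ((n : ℝ) * Vfun n (e1 n)) := by rw [hwNk]
      _ ≤ ρ ^ k * ((n : ℝ) * 1) := by
          have := V_e1 (n := n) hn
          have hρk : 0 ≤ ρ ^ k := pow_nonneg hρ0 k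
          have hn0 : (0 : ℝ) ≤ n := by linarith
          apply mul_le_mul_of_nonneg_left _ hρk
          exact mul_le_mul_of_nonneg_left this hn0
      _ = (n : ℝ) * ρ ^ k := by ring
  have hρexp : ρ ≤ Real.exp (-(1 / ((n : ℝ) - 1))) := by
    have h := Real.add_one_le_exp (-(1 / ((n : ℝ) - 1)))
    have heq : ρ = -(1 / ((n : ℝ) - 1)) + 1 := by
      have hne : (n : ℝ) - 1 ≠ 0 := by linarith
      rw [hρdef, div_eq_iff hne]
      field_simp
      ring
    rw [heq]
    exact h
  have hκ : Real.log n + c ≤ (k : ℝ) / ((n : ℝ) - 1) := by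
    have hlc : 0 < Real.log n + c := by
      have := Real.log_nonneg (by linarith : (1 : ℝ) ≤ n)
      linarith
    rw [le_div_iff₀ (by linarith : (0 : ℝ) < (n : ℝ) - 1)]
    have h2 : (Real.log n + c) * ((n : ℝ) - 1) ≤ (Real.log n + c) * n :=
      mul_le_mul_of_nonneg_left (by linarith) hlc.le
    have h3 : (Real.log n + c) * (n : ℝ) = (n : ℝ) * Real.log n + c * n := by ring
    linarith [hk]
  have hfinal : (n : ℝ) * ρ ^ k ≤ Real.exp (-c) := by
    have hpow : ρ ^ k ≤ Real.exp (-(1 / ((n : ℝ) - 1))) ^ k := pow_le_pow_left₀ hρ0 hρexp k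
    have hexp : Real.exp (-(1 / ((n : ℝ) - 1))) ^ k = Real.exp (-((k : ℝ) / ((n : ℝ) - 1))) := by
      rw [← Real.exp_nat_mul]
      congr 1
      field_simp
    calc (n : ℝ) * ρ ^ k ≤ (n : ℝ) * Real.exp (-((k : ℝ) / ((n : ℝ) - 1))) := by
          apply mul_le_mul_of_nonneg_left _ (by linarith : (0 : ℝ) ≤ n)
          rw [← hexp]
          exact hpow
      _ = Real.exp (Real.log n + -((k : ℝ) / ((n : ℝ) - 1))) := by
          rw [Real.exp_add, Real.exp_log (by linarith : (0 : ℝ) < n)]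
      _ ≤ Real.exp (-c) := Real.exp_le_exp.mpr (by linarith [hκ])
  rw [hint, hEint]
  have h1 : E = Real.sqrt (E ^ 2) := (Real.sqrt_sq hE0).symm
  rw [h1]
  have h2 : Real.sqrt (E ^ 2) ≤ Real.sqrt (Real.exp (-c)) :=
    Real.sqrt_le_sqrt (le_trans hE2 hfinal)
  rwa [← Real.exp_half] at h2
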